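/- arXiv:2505.20478 — 2 statements merged into one kernel-verified Lean document; each statement's English description precedes it below -/
import Mathlib

section
/- If Z is a chi-square random variable with p degrees of freedom, then for all t > 0, P(Z ≥ p + 2√(pt) + 2t) ≤ e^{-t} and P(Z ≤ p − 2√(pt)) ≤ e^{-t}. -/
open MeasureTheory ProbabilityTheory Real NNReal ENNReal

lemma cs_one_add_le_exp {x : ℝ} (hx : 0 ≤ x) : 1 + x + x^2/2 ≤ Real.exp x := by
  have h := Real.sum_le_exp_of_nonneg hx 3
  simp [Finset.sum_range_succ, Nat.factorial] at h
  nlinarith [h]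

lemma cs_one_sub_le_exp {x : ℝ} (hx : 0 ≤ x) : 1 - x ≤ Real.exp (-(x + x^2/2)) := by
  have key : ∀ y ∈ Set.Ici (0:ℝ), (1 - y) * Real.exp (y + y^2/2) ≤ 1 := by
    have hd : ∀ y : ℝ, HasDerivAt (fun z => (1 - z) * Real.exp (z + z^2/2))
        (-(y^2) * Real.exp (y + y^2/2)) y := by
      intro y
      have h1 : HasDerivAt (fun z : ℝ => 1 - z) (-1) y := by
        simpa using (hasDerivAt_id y).const_sub 1
      have h2 : HasDerivAt (fun z : ℝ => z + z^2/2) (1 + y) y := by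
        have := ((hasDerivAt_pow 2 y).div_const 2).const_add y
        exact ((hasDerivAt_id' y).add ((hasDerivAt_pow 2 y).div_const 2)).congr_deriv (by norm_num)
      have h3 := h2.exp
      have h4 := h1.mul h3
      exact h4.congr_deriv (by ring)
    have hanti : AntitoneOn (fun z => (1 - z) * Real.exp (z + z^2/2)) (Set.Ici 0) := by
      refine antitoneOn_of_deriv_nonpos (convex_Ici 0) ?_ ?_ ?_
      · exact (Continuous.mul (by continuity) (by continuity)).continuousOn
      · intro y hy
        exact ((hd y).differentiableAt).differentiableWithinAt
      · intro y hy
        rw [(hd y).deriv]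
        have : (0:ℝ) ≤ y^2 * Real.exp (y + y^2/2) := by positivity
        linarith
    intro y hy
    have := hanti (Set.self_mem_Ici) hy (by exact hy)
    simpa using this
  have h := key x hx
  have hepos : (0:ℝ) < Real.exp (x + x^2/2) := Real.exp_pos _
  rw [Real.exp_neg, ← one_div]
  exact (le_div_iff₀ hepos).mpr h

lemma cs_inv_sqrt_pow {y : ℝ} (hy : 0 < y) (p : ℕ) :
    ((Real.sqrt y)⁻¹)^p = Real.exp (-((p:ℝ) * Real.log y)/2) := by
  have h1 : (Real.sqrt y)⁻¹ = Real.exp (-(Real.log y/2)) := by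
    rw [← Real.log_sqrt hy.le, ← Real.log_inv, Real.exp_log (by positivity)]
  rw [h1, ← Real.exp_nat_mul]
  congr 1
  ring

lemma cs_upper_aux (p : ℕ) (hp : 0 < p) (t : ℝ) (ht : 0 < t) :
    ∃ s : ℝ, 0 ≤ s ∧ s < 1/2 ∧
      Real.exp (-s * ((p:ℝ) + 2*Real.sqrt ((p:ℝ)*t) + 2*t)) * ((Real.sqrt (1 - 2*s))⁻¹)^p
        ≤ Real.exp (-t) := by
  set P := (p:ℝ) with hPdef
  have hP : 0 < P := by rw [hPdef]; exact_mod_cast hp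
  set w := Real.sqrt (t/P) with hwdef
  have hw0 : 0 < w := Real.sqrt_pos.mpr (div_pos ht hP)
  have hw2 : w^2 = t/P := Real.sq_sqrt (div_pos ht hP).le
  have ht' : t = P * w^2 := by rw [hw2]; field_simp
  have hsqrtPt : Real.sqrt (P*t) = P * w := by
    rw [ht', show P*(P*w^2) = (P*w)^2 by ring, Real.sqrt_sq (by positivity)]
  set a := P + 2*Real.sqrt (P*t) + 2*t with hadef
  have haP : a = P * (1 + 2*w + 2*w^2) := by rw [hadef, hsqrtPt, ht']; ring
  have hq : (0:ℝ) < 1 + 2*w + 2*w^2 := by positivity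
  have ha : 0 < a := by rw [haP]; positivity
  refine ⟨(a-P)/(2*a), div_nonneg (by nlinarith) (by linarith), ?_, ?_⟩
  · rw [div_lt_iff₀ (by linarith)]
    linarith
  · have h1 : 1 - 2*((a-P)/(2*a)) = P/a := by field_simp; ring
    rw [h1, cs_inv_sqrt_pow (div_pos hP ha) p, ← Real.exp_add, Real.exp_le_exp]
    have hlogPa : Real.log (P/a) = Real.log P - Real.log a :=
      Real.log_div hP.ne' ha.ne'
    have hlog : Real.log a - Real.log P ≤ 2*w := by
      have h2 : Real.log (a/P) ≤ 2*w := by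
        rw [Real.log_le_iff_le_exp (div_pos ha hP)]
        have : a/P = 1 + 2*w + 2*w^2 := by rw [haP]; field_simp
        rw [this]
        have := cs_one_add_le_exp (x := 2*w) (by linarith)
        nlinarith [this]
      rwa [Real.log_div ha.ne' hP.ne'] at h2
    have hsa : (a-P)/(2*a) * a = (a-P)/2 := by field_simp
    rw [neg_mul, hsa, hlogPa]
    have haminus : a - P = 2*P*w + 2*P*w^2 := by rw [haP]; ring
    rw [ht', haminus]
    nlinarith [hlog, hP]

lemma cs_lower_aux (p : ℕ) (hp : 0 < p) (t : ℝ) (ht : 0 < t) :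
    ∃ s : ℝ, s ≤ 0 ∧ s < 1/2 ∧
      Real.exp (-s * ((p:ℝ) - 2*Real.sqrt ((p:ℝ)*t))) * ((Real.sqrt (1 - 2*s))⁻¹)^p
        ≤ Real.exp (-t) := by
  set P := (p:ℝ) with hPdef
  have hP : 0 < P := by rw [hPdef]; exact_mod_cast hp
  set w := Real.sqrt (t/P) with hwdef
  have hw0 : 0 < w := Real.sqrt_pos.mpr (div_pos ht hP)
  have hw2 : w^2 = t/P := Real.sq_sqrt (div_pos ht hP).le
  have ht' : t = P * w^2 := by rw [hw2]; field_simp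
  have hsqrtPt : Real.sqrt (P*t) = P * w := by
    rw [ht', show P*(P*w^2) = (P*w)^2 by ring, Real.sqrt_sq (by positivity)]
  set b := P - 2*Real.sqrt (P*t) with hbdef
  have hbP : b = P * (1 - 2*w) := by rw [hbdef, hsqrtPt]; ring
  rcases le_or_gt b 0 with hb | hb
  · -- degenerate case
    refine ⟨(1 - Real.exp (2*t/P))/2, ?_, ?_, ?_⟩
    · have : (1:ℝ) ≤ Real.exp (2*t/P) := by
        rw [Real.one_le_exp_iff]
        positivity
      linarith
    · have : (0:ℝ) < Real.exp (2*t/P) := Real.exp_pos _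
      linarith
    · have h1 : 1 - 2*((1 - Real.exp (2*t/P))/2) = Real.exp (2*t/P) := by ring
      rw [h1, cs_inv_sqrt_pow (Real.exp_pos _) p, Real.log_exp]
      have h2 : -((P : ℝ) * (2*t/P))/2 = -t := by field_simp
      rw [h2]
      have h3 : Real.exp (-(1 - Real.exp (2*t/P))/2 * b) ≤ 1 := by
        rw [Real.exp_le_one_iff]
        have h4 : (0:ℝ) ≤ -(1 - Real.exp (2*t/P))/2 := by
          have : (1:ℝ) ≤ Real.exp (2*t/P) := by
            rw [Real.one_le_exp_iff]; positivity
          linarith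
        exact mul_nonpos_of_nonneg_of_nonpos h4 hb
      have h5 : -((1 - Real.exp (2*t/P))/2) * b = -(1 - Real.exp (2*t/P))/2 * b := by ring
      rw [h5]
      calc Real.exp (-(1 - Real.exp (2*t/P))/2 * b) * Real.exp (-t)
          ≤ 1 * Real.exp (-t) :=
            mul_le_mul_of_nonneg_right h3 (Real.exp_pos _).le
        _ = Real.exp (-t) := one_mul _
  · -- main case
    have hw1 : 2*w < 1 := by nlinarith [hbP, hb, hP]
    refine ⟨(b-P)/(2*b), div_nonpos_of_nonpos_of_nonneg (by nlinarith) (by linarith), ?_, ?_⟩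
    · calc (b-P)/(2*b) ≤ 0 := div_nonpos_of_nonpos_of_nonneg (by nlinarith) (by linarith)
        _ < 1/2 := by norm_num
    · have h1 : 1 - 2*((b-P)/(2*b)) = P/b := by field_simp; ring
      rw [h1, cs_inv_sqrt_pow (div_pos hP hb) p, ← Real.exp_add, Real.exp_le_exp]
      have hlogPb : Real.log (P/b) = Real.log P - Real.log b :=
        Real.log_div hP.ne' hb.ne'
      have hlog : Real.log b - Real.log P ≤ -(2*w + 2*w^2) := by
        have h2 : Real.log (b/P) ≤ -(2*w + 2*w^2) := by
          rw [Real.log_le_iff_le_exp (div_pos hb hP)]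
          have hbp' : b/P = 1 - 2*w := by rw [hbP]; field_simp
          rw [hbp']
          have := cs_one_sub_le_exp (x := 2*w) (by linarith)
          calc 1 - 2*w ≤ Real.exp (-(2*w + (2*w)^2/2)) := this
            _ = Real.exp (-(2*w + 2*w^2)) := by congr 1; ring
        rwa [Real.log_div hb.ne' hP.ne'] at h2
      have hsb : (b-P)/(2*b) * b = (b-P)/2 := by field_simp
      rw [neg_mul, hsb, hlogPb]
      have hbminus : b - P = -(2*P*w) := by rw [hbP]; ring
      rw [ht', hbminus]
      nlinarith [hlog, hP]

lemma cs_iIndepFun_congr {Ω ι : Type*} [MeasurableSpace Ω] {μ : Measure Ω}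
    {β : ι → Type*} [m : ∀ i, MeasurableSpace (β i)] {f g : ∀ i, Ω → β i}
    (hf : iIndepFun f μ) (h : ∀ i, f i =ᵐ[μ] g i) : iIndepFun g μ := by
  classical
  rw [iIndepFun_iff] at hf ⊢
  intro S E hE
  simp only [MeasurableSpace.measurableSet_comap] at hE
  choose T hTm hTeq using hE
  set E' : ι → Set Ω := fun i => if hi : i ∈ S then f i ⁻¹' T i hi else ∅ with hE'def
  have hE'm : ∀ i, i ∈ S → MeasurableSet[(m i).comap (f i)] (E' i) := by
    intro i hi
    simp only [hE'def, dif_pos hi]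
    exact ⟨T i hi, hTm i hi, rfl⟩
  have hae : ∀ i ∈ S, E' i =ᵐ[μ] E i := by
    intro i hi
    simp only [hE'def, dif_pos hi]
    rw [← hTeq i hi]
    filter_upwards [h i] with ω hω
    change (f i ω ∈ T i hi) = (g i ω ∈ T i hi)
    rw [hω]
  calc μ (⋂ i ∈ S, E i) = μ (⋂ i ∈ S, E' i) :=
        (measure_congr (Filter.EventuallyEq.biInter S.finite_toSet hae)).symm
    _ = ∏ i ∈ S, μ (E' i) := hf S hE'm
    _ = ∏ i ∈ S, μ (E i) := Finset.prod_congr rfl fun i hi => measure_congr (hae i hi)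

lemma cs_integral_gaussian (g : ℝ → ℝ) :
    ∫ x, g x ∂(gaussianReal 0 1) = ∫ x, gaussianPDFReal 0 1 x * g x := by
  rw [gaussianReal_of_var_ne_zero _ one_ne_zero]
  have hrw : (gaussianPDF 0 1) =
      (fun x => ((Real.toNNReal (gaussianPDFReal 0 1 x) : ℝ≥0) : ℝ≥0∞)) := rfl
  rw [hrw, integral_withDensity_eq_integral_smul
      ((measurable_gaussianPDFReal 0 1).real_toNNReal) g]
  congr 1
  ext x
  rw [NNReal.smul_def, Real.coe_toNNReal _ (gaussianPDFReal_nonneg 0 1 x), smul_eq_mul]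

lemma cs_integrable_gaussian_iff {g : ℝ → ℝ} :
    Integrable g (gaussianReal 0 1) ↔
      Integrable (fun x => gaussianPDFReal 0 1 x * g x) volume := by
  rw [gaussianReal_of_var_ne_zero _ one_ne_zero]
  have hrw : (gaussianPDF 0 1) =
      (fun x => ((Real.toNNReal (gaussianPDFReal 0 1 x) : ℝ≥0) : ℝ≥0∞)) := rfl
  rw [hrw, integrable_withDensity_iff_integrable_smul
      ((measurable_gaussianPDFReal 0 1).real_toNNReal)]
  constructor <;> intro h <;> refine h.congr (Filter.Eventually.of_forall fun x => ?_) <;>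
    simp only [NNReal.smul_def, Real.coe_toNNReal _ (gaussianPDFReal_nonneg 0 1 x), smul_eq_mul]

lemma cs_pdf_mul_exp (s : ℝ) (x : ℝ) :
    gaussianPDFReal 0 1 x * Real.exp (s * x^2)
      = (Real.sqrt (2*π))⁻¹ * Real.exp (-(1/2 - s) * x^2) := by
  rw [gaussianPDFReal_def]
  simp only [NNReal.coe_one, mul_one, sub_zero]
  rw [mul_assoc, ← Real.exp_add]
  congr 2
  ring

lemma cs_exp_sq_integrable (s : ℝ) (hs : s < 1/2) :
    Integrable (fun x => Real.exp (s * x^2)) (gaussianReal 0 1) := by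
  rw [cs_integrable_gaussian_iff]
  have h2 : (0:ℝ) < 1/2 - s := by linarith
  have : Integrable (fun x : ℝ => (Real.sqrt (2*π))⁻¹ * Real.exp (-(1/2 - s) * x^2)) volume :=
    (integrable_exp_neg_mul_sq h2).const_mul _
  exact this.congr (Filter.Eventually.of_forall fun x => (cs_pdf_mul_exp s x).symm)

lemma cs_exp_sq_integral (s : ℝ) (hs : s < 1/2) :
    ∫ x, Real.exp (s * x^2) ∂(gaussianReal 0 1) = (Real.sqrt (1 - 2*s))⁻¹ := by
  rw [cs_integral_gaussian]
  have h2 : (0:ℝ) < 1/2 - s := by linarith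
  have h3 : (0:ℝ) < 1 - 2*s := by linarith
  calc ∫ x, gaussianPDFReal 0 1 x * Real.exp (s * x^2)
      = ∫ x, (Real.sqrt (2*π))⁻¹ * Real.exp (-(1/2 - s) * x^2) := by
        congr 1; ext x; exact cs_pdf_mul_exp s x
    _ = (Real.sqrt (2*π))⁻¹ * ∫ x, Real.exp (-(1/2 - s) * x^2) := integral_const_mul _ _
    _ = (Real.sqrt (2*π))⁻¹ * Real.sqrt (π / (1/2 - s)) := by rw [integral_gaussian]
    _ = (Real.sqrt (1 - 2*s))⁻¹ := by
        rw [← Real.sqrt_inv, ← Real.sqrt_mul (by positivity), ← Real.sqrt_inv]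
        congr 1
        have hpi : (0:ℝ) < π := Real.pi_pos
        field_simp

/-- Chi-square tail bounds (Laurent–Massart): if `Z = ∑ i, (X i)²` for `p` i.i.d. standard
Gaussians, then for all `t > 0`,
`P(Z ≥ p + 2√(pt) + 2t) ≤ e^{-t}` and `P(Z ≤ p − 2√(pt)) ≤ e^{-t}`. -/
theorem chi_square_tail_bounds
    {Ω : Type*} [MeasureSpace Ω] [IsProbabilityMeasure (ℙ : Measure Ω)]
    (p : ℕ) (hp : 0 < p) (X : Fin p → Ω → ℝ)
    (hindep : iIndepFun X ℙ)
    (hlaw : ∀ i, Measure.map (X i) ℙ = gaussianReal 0 1)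
    (Z : Ω → ℝ) (hZ : ∀ ω, Z ω = ∑ i, X i ω ^ 2) :
    ∀ t : ℝ, 0 < t →
      ℙ {ω | (p : ℝ) + 2 * Real.sqrt (p * t) + 2 * t ≤ Z ω} ≤ ENNReal.ofReal (Real.exp (-t)) ∧
      ℙ {ω | Z ω ≤ (p : ℝ) - 2 * Real.sqrt (p * t)} ≤ ENNReal.ofReal (Real.exp (-t)) := by
  classical
  intro t ht
  have hXae : ∀ i, AEMeasurable (X i) ℙ := by
    intro i
    refine aemeasurable_of_map_neZero ?_
    rw [hlaw i]
    infer_instance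
  set X' : Fin p → Ω → ℝ := fun i => (hXae i).mk (X i) with hX'def
  have hX'm : ∀ i, Measurable (X' i) := fun i => (hXae i).measurable_mk
  have hae : ∀ i, X i =ᵐ[ℙ] X' i := fun i => (hXae i).ae_eq_mk
  have hlaw' : ∀ i, Measure.map (X' i) ℙ = gaussianReal 0 1 := fun i => by
    rw [← Measure.map_congr (hae i), hlaw i]
  have hindep' : iIndepFun X' ℙ := cs_iIndepFun_congr hindep hae
  set Y : Fin p → Ω → ℝ := fun i ω => X' i ω ^ 2 with hYdef
  have hYm : ∀ i, Measurable (Y i) := fun i => (hX'm i).pow_const 2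
  have hYindep : iIndepFun Y ℙ :=
    hindep'.comp (fun _ => fun x : ℝ => x ^ 2) (fun _ => measurable_id.pow_const 2)
  have hZae : Z =ᵐ[ℙ] (∑ i, Y i) := by
    have hall : ∀ᵐ ω ∂ℙ, ∀ i, X i ω = X' i ω := ae_all_iff.mpr hae
    filter_upwards [hall] with ω hω
    rw [hZ ω, Finset.sum_apply]
    exact Finset.sum_congr rfl fun i _ => by rw [hω i]
  have hYint : ∀ (s : ℝ), s < 1/2 → ∀ i, Integrable (fun ω => Real.exp (s * Y i ω)) ℙ := by
    intro s hs i
    have h1 : Integrable (fun x : ℝ => Real.exp (s * x^2)) (Measure.map (X' i) ℙ) := by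
      rw [hlaw' i]; exact cs_exp_sq_integrable s hs
    exact (integrable_map_measure
      (Measurable.aestronglyMeasurable (by measurability)) (hX'm i).aemeasurable).mp h1
  have hYmgf : ∀ (s : ℝ), s < 1/2 → ∀ i, mgf (Y i) ℙ s = (Real.sqrt (1 - 2*s))⁻¹ := by
    intro s hs i
    have hmg : mgf (Y i) ℙ s = ∫ ω, Real.exp (s * (X' i ω)^2) ∂ℙ := rfl
    have hmap : ∫ x, Real.exp (s * x^2) ∂(Measure.map (X' i) ℙ)
        = ∫ ω, Real.exp (s * (X' i ω)^2) ∂ℙ :=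
      integral_map (hX'm i).aemeasurable (Measurable.aestronglyMeasurable (by measurability))
    rw [hmg, ← hmap, hlaw' i, cs_exp_sq_integral s hs]
  have hsummgf : ∀ (s : ℝ), s < 1/2 →
      mgf (∑ i, Y i) ℙ s = ((Real.sqrt (1 - 2*s))⁻¹)^p := by
    intro s hs
    rw [hYindep.mgf_sum hYm]
    simp [hYmgf s hs]
  have hsumint : ∀ (s : ℝ), s < 1/2 →
      Integrable (fun ω => Real.exp (s * (∑ i, Y i) ω)) ℙ :=
    fun s hs => hYindep.integrable_exp_mul_sum hYm (fun i _ => hYint s hs i)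
  constructor
  · obtain ⟨s, hs0, hs2, hbound⟩ := cs_upper_aux p hp t ht
    set a := (p:ℝ) + 2 * Real.sqrt (p * t) + 2 * t with hadef
    have hset : ℙ {ω | a ≤ Z ω} = ℙ {ω | a ≤ (∑ i, Y i) ω} := by
      apply measure_congr
      filter_upwards [hZae] with ω hω
      change (a ≤ Z ω) = (a ≤ (∑ i, Y i) ω)
      rw [hω]
    have hch := measure_ge_le_exp_mul_mgf (μ := ℙ) (X := ∑ i, Y i) a hs0 (hsumint s hs2)
    rw [hsummgf s hs2] at hch
    have hfinal : (ℙ {ω | a ≤ (∑ i, Y i) ω}).toReal ≤ Real.exp (-t) := le_trans hch hbound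
    rw [hset]
    calc ℙ {ω | a ≤ (∑ i, Y i) ω}
        = ENNReal.ofReal ((ℙ {ω | a ≤ (∑ i, Y i) ω}).toReal) :=
          (ENNReal.ofReal_toReal (measure_ne_top _ _)).symm
      _ ≤ ENNReal.ofReal (Real.exp (-t)) := ENNReal.ofReal_le_ofReal hfinal
  · obtain ⟨s, hs0, hs2, hbound⟩ := cs_lower_aux p hp t ht
    set b := (p:ℝ) - 2 * Real.sqrt (p * t) with hbdef
    have hset : ℙ {ω | Z ω ≤ b} = ℙ {ω | (∑ i, Y i) ω ≤ b} := by
      apply measure_congr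
      filter_upwards [hZae] with ω hω
      change (Z ω ≤ b) = ((∑ i, Y i) ω ≤ b)
      rw [hω]
    have hch := measure_le_le_exp_mul_mgf (μ := ℙ) (X := ∑ i, Y i) b hs0 (hsumint s hs2)
    rw [hsummgf s hs2] at hch
    have hfinal : (ℙ {ω | (∑ i, Y i) ω ≤ b}).toReal ≤ Real.exp (-t) := le_trans hch hbound
    rw [hset]
    calc ℙ {ω | (∑ i, Y i) ω ≤ b}
        = ENNReal.ofReal ((ℙ {ω | (∑ i, Y i) ω ≤ b}).toReal) :=
          (ENNReal.ofReal_toReal (measure_ne_top _ _)).symm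
      _ ≤ ENNReal.ofReal (Real.exp (-t)) := ENNReal.ofReal_le_ofReal hfinal
end

section
/- Let G₁, ..., G_K partition {1,...,n} with each |G_k| ≥ 1. Suppose Z ∈ ℝ^{n×n} is symmetric positive semidefinite, has Z 𝟙ₙ = 𝟙ₙ, tr(Z) = K, and is block-diagonal with respect to the partition (i.e., Z_{ij} = 0 whenever i ∈ G_k, j ∈ G_l with k ≠ l). Then Z = ∑_{k=1}^K (1/|G_k|) 𝟙_{G_k} 𝟙_{G_k}ᵀ. -/
open Matrix
open scoped BigOperators

lemma dp_sum_left {ι n : Type*} [Fintype n] (s : Finset ι) (f : ι → n → ℝ) (x : n → ℝ) :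
    (∑ k ∈ s, f k) ⬝ᵥ x = ∑ k ∈ s, f k ⬝ᵥ x := by
  simp only [dotProduct, Finset.sum_apply, Finset.sum_mul]
  exact Finset.sum_comm

lemma dp_sum_right {ι n : Type*} [Fintype n] (s : Finset ι) (f : ι → n → ℝ) (x : n → ℝ) :
    x ⬝ᵥ (∑ k ∈ s, f k) = ∑ k ∈ s, x ⬝ᵥ f k := by
  simp only [dotProduct, Finset.sum_apply, Finset.mul_sum]
  exact Finset.sum_comm

lemma sum_mulVec' {ι n m : Type*} [Fintype n] (s : Finset ι) (f : ι → Matrix m n ℝ) (x : n → ℝ) :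
    (∑ k ∈ s, f k) *ᵥ x = ∑ k ∈ s, (f k *ᵥ x) := by
  funext i
  simp only [mulVec, dotProduct, Finset.sum_apply, Matrix.sum_apply, Finset.sum_mul]
  exact Finset.sum_comm

lemma psd_trace_zero_eq_zero {n : ℕ} {W : Matrix (Fin n) (Fin n) ℝ}
    (h : W.PosSemidef) (ht : W.trace = 0) : W = 0 := by
  have hform : ∀ j, (star (Pi.single j 1 : Fin n → ℝ)) ⬝ᵥ W *ᵥ (Pi.single j 1) = W j j := by
    intro j
    simp [mulVec_single, dotProduct_single]
  have hnn : ∀ j, 0 ≤ W j j := fun j => by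
    have := h.dotProduct_mulVec_nonneg (Pi.single j 1)
    rwa [hform j] at this
  have hdiag : ∀ j, W j j = 0 := by
    intro j
    have := (Finset.sum_eq_zero_iff_of_nonneg (fun j _ => hnn j)).mp ht j (Finset.mem_univ j)
    exact this
  ext i j
  have hz : W *ᵥ (Pi.single j 1) = 0 := by
    rw [← h.dotProduct_mulVec_zero_iff, hform j, hdiag j]
  have := congrFun hz i
  simpa [mulVec_single] using this

/-- Uniqueness of the block-diagonal feasible point: if `Z` is symmetric PSD, satisfies
`Z 𝟙ₙ = 𝟙ₙ`, `tr Z = K`, and is block-diagonal with respect to a partition `G₁,…,G_K`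
(with each `|G_k| ≥ 1`), then `Z = ∑_k |G_k|⁻¹ 𝟙_{G_k} 𝟙_{G_k}ᵀ`. -/
theorem sdp_block_diagonal_unique
    (n K : ℕ) (G : Fin K → Finset (Fin n))
    (hne : ∀ k, 1 ≤ (G k).card)
    (hdisj : ∀ k l, k ≠ l → Disjoint (G k) (G l))
    (hcover : ∀ i : Fin n, ∃ k, i ∈ G k)
    (Z : Matrix (Fin n) (Fin n) ℝ)
    (hpsd : Z.PosSemidef)
    (hrow : Z *ᵥ (fun _ => (1 : ℝ)) = fun _ => (1 : ℝ))
    (htr : Z.trace = (K : ℝ))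
    (hblock : ∀ k l, k ≠ l → ∀ i ∈ G k, ∀ j ∈ G l, Z i j = 0) :
    Z = ∑ k, ((G k).card : ℝ)⁻¹ •
      Matrix.vecMulVec (fun i => if i ∈ G k then (1 : ℝ) else 0)
        (fun i => if i ∈ G k then (1 : ℝ) else 0) := by
  set v : Fin K → Fin n → ℝ := fun k i => if i ∈ G k then (1 : ℝ) else 0 with hv
  set S : Matrix (Fin n) (Fin n) ℝ :=
    ∑ k, ((G k).card : ℝ)⁻¹ • Matrix.vecMulVec (v k) (v k) with hS
  have hm : ∀ k, ((G k).card : ℝ) ≠ 0 := fun k => by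
    have := hne k; positivity
  -- dot products of indicators
  have hvv : ∀ k, v k ⬝ᵥ v k = ((G k).card : ℝ) := by
    intro k
    simp only [dotProduct, hv, ite_mul, one_mul, zero_mul, if_pos]
    rw [Finset.sum_ite_mem, Finset.univ_inter]
    simp
  have hvvne : ∀ k l, k ≠ l → v k ⬝ᵥ v l = 0 := by
    intro k l hkl
    apply Finset.sum_eq_zero
    intro i _
    by_cases hik : i ∈ G k
    · have : i ∉ G l := fun hil => (Finset.disjoint_left.mp (hdisj k l hkl)) hik hil
      simp [hv, this]
    · simp [hv, hik]
  -- Z fixes each indicator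
  have hZv : ∀ k, Z *ᵥ v k = v k := by
    intro k
    funext i
    show ∑ j, Z i j * v k j = v k i
    have hsum : ∑ j, Z i j * v k j = ∑ j ∈ G k, Z i j := by
      simp only [hv, mul_ite, mul_one, mul_zero]
      rw [Finset.sum_ite_mem, Finset.univ_inter]
    rw [hsum]
    by_cases hik : i ∈ G k
    · have h1 : ∑ j ∈ G k, Z i j = ∑ j, Z i j := by
        apply Finset.sum_subset (Finset.subset_univ _)
        intro j _ hj
        obtain ⟨l, hl⟩ := hcover j
        have hkl : k ≠ l := fun h => hj (h ▸ hl)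
        exact hblock k l hkl i hik j hl
      have h2 := congrFun hrow i
      simp only [mulVec, dotProduct, mul_one] at h2
      rw [h1, h2]
      simp [hv, hik]
    · have : ∑ j ∈ G k, Z i j = 0 := by
        apply Finset.sum_eq_zero
        intro j hj
        obtain ⟨l, hl⟩ := hcover i
        have hlk : l ≠ k := fun h => hik (h ▸ hl)
        exact hblock l k hlk i hl j hj
      rw [this]
      simp [hv, hik]
  -- trace of S
  have htrS : S.trace = (K : ℝ) := by
    rw [hS, trace_sum]
    have : ∀ k, (((G k).card : ℝ)⁻¹ • Matrix.vecMulVec (v k) (v k)).trace = 1 := by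
      intro k
      rw [trace_smul]
      have : (Matrix.vecMulVec (v k) (v k)).trace = ((G k).card : ℝ) := by
        rw [Matrix.trace]
        simp only [Matrix.diag, vecMulVec_apply]
        exact hvv k
      rw [this, smul_eq_mul, inv_mul_cancel₀ (hm k)]
    simp [this]
  -- S is symmetric
  have hSsym : Sᴴ = S := by
    rw [hS]
    ext i j
    simp only [conjTranspose_apply, Matrix.sum_apply, Matrix.smul_apply, vecMulVec_apply,
      star_sum, star_smul, star_mul', RCLike.star_def, map_inv₀, conj_trivial]
    exact Finset.sum_congr rfl fun k _ => by rw [mul_comm (v k j) (v k i)]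
  -- quadratic form of S
  have hSx : ∀ x : Fin n → ℝ, S *ᵥ x = ∑ k, (((G k).card : ℝ)⁻¹ * (v k ⬝ᵥ x)) • v k := by
    intro x
    rw [hS, sum_mulVec']
    congr 1
    funext k
    funext i
    simp only [Matrix.mulVec, dotProduct, Matrix.smul_apply, vecMulVec_apply, Pi.smul_apply,
      smul_eq_mul, Finset.sum_apply, Finset.mul_sum, mul_assoc]
    rw [Finset.sum_mul]
    exact Finset.sum_congr rfl fun j _ => by ring
  -- positivity of quadratic form of Z - S
  have hqf : ∀ x : Fin n → ℝ, x ⬝ᵥ (S *ᵥ x) ≤ x ⬝ᵥ (Z *ᵥ x) := by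
    intro x
    set u : Fin n → ℝ := ∑ k, (((G k).card : ℝ)⁻¹ * (v k ⬝ᵥ x)) • v k with hu
    have hZu : Z *ᵥ u = u := by
      rw [hu, ← Matrix.mulVecLin_apply, map_sum]
      congr 1
      funext k
      rw [_root_.map_smul, Matrix.mulVecLin_apply, hZv k]
    have hux : u ⬝ᵥ x = ∑ k, ((G k).card : ℝ)⁻¹ * (v k ⬝ᵥ x) * (v k ⬝ᵥ x) := by
      rw [hu, dp_sum_left]
      congr 1
      funext k
      rw [smul_dotProduct, smul_eq_mul]
    have huu : u ⬝ᵥ u = u ⬝ᵥ x := by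
      rw [hux]
      nth_rewrite 1 [hu]
      rw [dp_sum_left]
      apply Finset.sum_congr rfl
      intro k _
      rw [smul_dotProduct, hu, dp_sum_right, Finset.sum_eq_single k]
      · rw [dotProduct_smul, hvv k, smul_eq_mul, smul_eq_mul]
        have hmk := hm k
        field_simp
      · intro l _ hlk
        rw [dotProduct_smul, hvvne k l (Ne.symm hlk)]
        simp
      · intro h; exact absurd (Finset.mem_univ k) h
    have hxSx : x ⬝ᵥ (S *ᵥ x) = u ⬝ᵥ x := by
      rw [hSx x, hux, dp_sum_right]
      congr 1
      funext k
      rw [dotProduct_smul, smul_eq_mul, dotProduct_comm]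
    have hxu : x ⬝ᵥ u = u ⬝ᵥ x := dotProduct_comm x u
    have huZx : u ⬝ᵥ (Z *ᵥ x) = u ⬝ᵥ x := by
      rw [dotProduct_mulVec, ← Matrix.mulVec_transpose]
      have hzt : Zᵀ = Z := by
        ext i j
        have := congrFun (congrFun hpsd.1.eq i) j
        simpa [conjTranspose_apply] using this
      rw [hzt, hZu]
    have hpos : 0 ≤ (x - u) ⬝ᵥ (Z *ᵥ (x - u)) := by
      have := hpsd.dotProduct_mulVec_nonneg (x - u)
      simpa using this
    have hexp : (x - u) ⬝ᵥ (Z *ᵥ (x - u)) = x ⬝ᵥ (Z *ᵥ x) - u ⬝ᵥ x := by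
      rw [Matrix.mulVec_sub, hZu, sub_dotProduct, dotProduct_sub, dotProduct_sub,
        huZx, huu, hxu]
      ring
    rw [hxSx]
    linarith [hexp ▸ hpos]
  -- W := Z - S is PSD with trace 0
  have hWpsd : (Z - S).PosSemidef := by
    refine posSemidef_iff_dotProduct_mulVec.mpr ⟨?_, ?_⟩
    · show (Z - S)ᴴ = Z - S
      rw [conjTranspose_sub, hpsd.1, hSsym]
    · intro x
      have := hqf x
      rw [Matrix.sub_mulVec, dotProduct_sub]
      simpa using this
  have hWtr : (Z - S).trace = 0 := by
    rw [trace_sub, htr, htrS, sub_self]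
  have := psd_trace_zero_eq_zero hWpsd hWtr
  have : Z = S := by
    rwa [sub_eq_zero] at this
  exact this
end
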